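/- arXiv:2308.00743 — 2 statements merged into one kernel-verified Lean document; each statement's English description precedes it below -/
import Mathlib

section
/- In the Clifford algebra generated by 4N Majorana operators α_j, β_j (j = 1,...,2N on a ring), the fermion parity P_F = ∏_{j=1}^{2N} (i β_j α_j) equals (−1)^{f+1} ∏_{j=1}^{2N} (i β_j α_{j+1}) where indices are taken with f-twisted boundary conditions α_{j+2N} = (−1)^f α_j, β_{j+2N} = (−1)^f β_j. -/
section FermionParityAux

variable {A : Type} [Ring A] [Algebra ℂ A]

private lemma prod_map_smul' {ι : Type*} (l : List ι) (c : ι → ℂ) (g : ι → A) :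
    (l.map fun j => c j • g j).prod = (l.map c).prod • (l.map g).prod := by
  induction l with
  | nil => simp
  | cons x xs ih =>
    simp only [List.map_cons, List.prod_cons, ih, smul_mul_smul_comm]

private lemma step_aux (P B T x y z : A) (h : x * (y * z) = -(z * (y * x))) :
    P * (B * x) * y * z * T = -(P * B * z * (y * x * T)) := by
  calc P * (B * x) * y * z * T = P * B * (x * (y * z)) * T := by noncomm_ring
    _ = P * B * (-(z * (y * x))) * T := by rw [h]
    _ = -(P * B * z * (y * x * T)) := by noncomm_ring

private lemma key (n : ℕ) (a b : ℕ → A)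
    (ha : ∀ i j, i < n → j < n → i ≠ j → a i * a j = -(a j * a i))
    (hab : ∀ i j, i < n → j < n → a i * b j = -(b j * a i)) :
    ∀ d k, k + d = n - 1 → 1 ≤ n →
      ((List.range n).map (fun j => b j * a ((j + 1) % n))).prod =
        (-1 : ℂ) ^ d •
          (((List.range k).map (fun j => b j * a (j + 1))).prod * b k * a 0 *
            ((List.range' (k + 1) d).map (fun j => b j * a j)).prod) := by
  intro d
  induction d with
  | zero =>
    intro k hk hn
    obtain ⟨m, rfl⟩ : ∃ m, n = m + 1 := ⟨n - 1, by omega⟩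
    have hkm : k = m := by omega
    subst hkm
    rw [List.range_succ, List.map_append, List.prod_append]
    have h1 : (List.range k).map (fun j => b j * a ((j + 1) % (k + 1))) =
        (List.range k).map (fun j => b j * a (j + 1)) := by
      apply List.map_congr_left
      intro x hx
      have : x < k := List.mem_range.mp hx
      rw [Nat.mod_eq_of_lt (by omega)]
    rw [h1]
    simp [mul_assoc, Nat.mod_self]
  | succ d ih =>
    intro k hk hn
    have h1 := ih (k + 1) (by omega) hn
    rw [h1, List.range_succ, List.map_append, List.prod_append, List.range'_succ,
      List.map_cons, List.prod_cons]
    have hk1 : k + 1 < n := by omega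
    have h0 : 0 < n := hn
    have e1 : b (k + 1) * a 0 = -(a 0 * b (k + 1)) := by
      rw [hab 0 (k + 1) h0 hk1, neg_neg]
    have hkey : a (k + 1) * (b (k + 1) * a 0) = -(a 0 * (b (k + 1) * a (k + 1))) := by
      calc a (k + 1) * (b (k + 1) * a 0) = a (k + 1) * -(a 0 * b (k + 1)) := by rw [e1]
        _ = -(a (k + 1) * a 0 * b (k + 1)) := by rw [mul_neg, mul_assoc]
        _ = -(-(a 0 * a (k + 1)) * b (k + 1)) := by
            rw [ha (k + 1) 0 hk1 h0 (by omega)]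
        _ = a 0 * (a (k + 1) * b (k + 1)) := by rw [neg_mul, neg_neg, mul_assoc]
        _ = -(a 0 * (b (k + 1) * a (k + 1))) := by
            rw [hab (k + 1) (k + 1) hk1 hk1, mul_neg]
    simp only [List.map_nil, List.prod_nil, mul_one, List.map_cons, List.prod_cons]
    rw [step_aux _ _ _ _ _ _ hkey, pow_succ, mul_smul, neg_one_smul, smul_neg]


private lemma main (n : ℕ) (hn2 : 2 ≤ n) (hodd : Odd (n - 1)) (f : ℕ) [NeZero n]
    (α β : Fin n → A)
    (hαα : ∀ i j : Fin n, i ≠ j → α i * α j = -(α j * α i))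
    (hαβ : ∀ i j : Fin n, α i * β j = -(β j * α i)) :
    ((List.finRange n).map (fun j => Complex.I • (β j * α j))).prod =
      ((-1 : ℂ) ^ (f + 1)) •
        ((List.finRange n).map (fun j =>
          (if j.val = n - 1 then ((-1 : ℂ) ^ f) else 1) •
            (Complex.I • (β j * α (j + 1))))).prod := by
  have hn : 0 < n := by omega
  set a : ℕ → A := fun j => α ⟨j % n, Nat.mod_lt _ hn⟩ with ha_def
  set b : ℕ → A := fun j => β ⟨j % n, Nat.mod_lt _ hn⟩ with hb_def
  have haval : ∀ j : Fin n, a j.val = α j := by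
    intro j
    show α _ = α j
    congr 1
    exact Fin.ext (Nat.mod_eq_of_lt j.isLt)
  have hbval : ∀ j : Fin n, b j.val = β j := by
    intro j
    show β _ = β j
    congr 1
    exact Fin.ext (Nat.mod_eq_of_lt j.isLt)
  have hashift : ∀ j : Fin n, a ((j.val + 1) % n) = α (j + 1) := by
    intro j
    show α _ = α (j + 1)
    congr 1
    apply Fin.ext
    show (j.val + 1) % n % n = ((j + 1 : Fin n)).val
    rw [Nat.mod_mod_of_dvd _ dvd_rfl, Fin.val_add, Fin.val_one',
      Nat.mod_eq_of_lt (show 1 < n by omega)]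
  have ha' : ∀ i j, i < n → j < n → i ≠ j → a i * a j = -(a j * a i) := by
    intro i j hi hj hij
    exact hαα ⟨i % n, Nat.mod_lt _ hn⟩ ⟨j % n, Nat.mod_lt _ hn⟩
      (by simp [Fin.ext_iff, Nat.mod_eq_of_lt hi, Nat.mod_eq_of_lt hj, hij])
  have hab' : ∀ i j, i < n → j < n → a i * b j = -(b j * a i) := by
    intro i j hi hj
    exact hαβ ⟨i % n, Nat.mod_lt _ hn⟩ ⟨j % n, Nat.mod_lt _ hn⟩
  have hconv : ∀ (g : Fin n → A) (g' : ℕ → A), (∀ j : Fin n, g j = g' j.val) →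
      ((List.finRange n).map g).prod = ((List.range n).map g').prod := by
    intro g g' h
    have hfr : (List.finRange n).map (fun i : Fin n => (i : ℕ)) = List.range n :=
      List.ext_getElem (by simp) (by simp)
    rw [← hfr, List.map_map]
    congr 1
    exact List.map_congr_left fun j _ => h j
  have hL : ((List.finRange n).map (fun j => Complex.I • (β j * α j))).prod =
      ((List.range n).map (fun x => Complex.I • (b x * a x))).prod := by
    refine hconv _ _ fun j => ?_
    rw [haval j, hbval j]
  have hR : ((List.finRange n).map (fun j =>
        (if j.val = n - 1 then ((-1 : ℂ) ^ f) else 1) •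
          (Complex.I • (β j * α (j + 1))))).prod =
      ((List.range n).map (fun x =>
        ((if x = n - 1 then ((-1 : ℂ) ^ f) else 1) * Complex.I) •
          (b x * a ((x + 1) % n)))).prod := by
    refine hconv _ _ fun j => ?_
    rw [← hbval j, ← hashift j, smul_smul]
  rw [hL, hR]
  rw [prod_map_smul' (List.range n) (fun _ => Complex.I) (fun x => b x * a x),
    prod_map_smul' (List.range n) (fun x => (if x = n - 1 then ((-1 : ℂ) ^ f) else 1) * Complex.I)
      (fun x => b x * a ((x + 1) % n))]
  obtain ⟨m, hm⟩ : ∃ m, n = m + 1 := ⟨n - 1, by omega⟩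
  have hscal1 : ((List.range n).map (fun _ : ℕ => Complex.I)).prod = Complex.I ^ n := by
    simp [List.map_const']
  have hscal2 : ((List.range n).map
      (fun x => (if x = n - 1 then ((-1 : ℂ) ^ f) else 1) * Complex.I)).prod
      = ((-1 : ℂ) ^ f) * Complex.I ^ n := by
    rw [hm, List.range_succ, List.map_append, List.prod_append]
    have h1 : (List.range m).map
          (fun x => (if x = m + 1 - 1 then ((-1 : ℂ) ^ f) else 1) * Complex.I)
        = (List.range m).map (fun _ => Complex.I) := by
      apply List.map_congr_left
      intro x hx
      have : x < m := List.mem_range.mp hx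
      rw [if_neg (by omega), one_mul]
    rw [h1]
    simp only [List.map_const', List.length_range, List.prod_replicate, List.map_cons,
      List.map_nil, List.prod_cons, List.prod_nil, pow_succ, Nat.add_sub_cancel,
      eq_self_iff_true, if_true, mul_one]
    ring
  rw [hscal1, hscal2]
  have hkeyn := key n a b ha' hab' m 0 (by omega) (by omega)
  have hdiag : ((List.range n).map (fun x => b x * a x)).prod =
      b 0 * a 0 * ((List.range' 1 m).map (fun x => b x * a x)).prod := by
    rw [hm, List.range_eq_range', List.range'_succ, List.map_cons, List.prod_cons, mul_assoc]
  have hS : ((List.range n).map (fun x => b x * a ((x + 1) % n))).prod =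
      -(((List.range n).map (fun x => b x * a x)).prod) := by
    rw [hkeyn, hdiag]
    have hmodd : Odd m := by rw [hm] at hodd; simpa using hodd
    rw [hmodd.neg_one_pow]
    simp [mul_assoc]
  rw [hS, smul_neg, smul_neg, smul_smul, ← neg_smul]
  congr 1
  have h2 : ((-1 : ℂ)) ^ (f + 1) * ((-1 : ℂ)) ^ f = -1 := by
    rw [← pow_add, show f + 1 + f = 2 * f + 1 by ring, pow_succ, pow_mul]
    norm_num
  calc Complex.I ^ n = -(-1 * Complex.I ^ n) := by ring
    _ = -((-1 : ℂ) ^ (f + 1) * ((-1 : ℂ) ^ f * Complex.I ^ n)) := by rw [← mul_assoc, h2]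

end FermionParityAux

/-- **Two expressions for the fermion parity.**
In the Clifford algebra generated by the `4N` Majorana operators
`α_j, β_j` (`j = 1, …, 2N` on a ring, with `f`-twisted boundary conditions so
that wrapping `α_{j+1}` around the ring produces a sign `(−1)^f`), the fermion
parity satisfies
`P_F = ∏_{j=1}^{2N} (i β_j α_j) = (−1)^{f+1} ∏_{j=1}^{2N} (i β_j α_{j+1})`. -/
theorem stmt7 (N : ℕ) (hN : 0 < N) (f : ℕ) (hf : f ≤ 1)
    (A : Type) [Ring A] [Algebra ℂ A]
    (α β : Fin (2 * N) → A)
    (hαα : ∀ i j, α i * α j + α j * α i = if i = j then 2 else 0)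
    (hββ : ∀ i j, β i * β j + β j * β i = if i = j then 2 else 0)
    (hαβ : ∀ i j, α i * β j + β j * α i = 0) :
    letI : NeZero (2 * N) := ⟨by omega⟩
    ((List.finRange (2 * N)).map (fun j => Complex.I • (β j * α j))).prod =
      ((-1 : ℂ) ^ (f + 1)) •
        ((List.finRange (2 * N)).map (fun j =>
          (if j.val = 2 * N - 1 then ((-1 : ℂ) ^ f) else 1) •
            (Complex.I • (β j * α (j + 1))))).prod := by
  letI : NeZero (2 * N) := ⟨by omega⟩
  refine main (2 * N) (by omega) ⟨N - 1, by omega⟩ f α β ?_ ?_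
  · intro i j hij
    have h := hαα i j
    rw [if_neg hij] at h
    exact eq_neg_of_add_eq_zero_left h
  · intro i j
    exact eq_neg_of_add_eq_zero_left (hαβ i j)
end

section
/- Majumdar–Ghosh Hamiltonian positivity and ground states: on (C^2)^{⊗2N} with periodic boundary conditions, the operator H = Σ_{j=1}^{2N} [ (1/4)(σ⃗_j + σ⃗_{j+1} + σ⃗_{j+2})^2 − (3/4) ] is positive semidefinite, and the two dimer states |Dimer_o⟩ = ⊗_{j=1}^{N} |[2j−1, 2j]⟩ and |Dimer_e⟩ = ⊗_{j=1}^{N} |[2j, 2j+1]⟩ (tensor products of nearest-neighbor singlets) are annihilated by H; hence they are ground states with ground energy 0. -/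
open Matrix
open scoped ComplexOrder

noncomputable section

/-- The Pauli matrix `σˣ`. -/
def pauliX : Matrix (Fin 2) (Fin 2) ℂ := !![0, 1; 1, 0]

/-- The Pauli matrix `σʸ`. -/
def pauliY : Matrix (Fin 2) (Fin 2) ℂ := !![0, -Complex.I; Complex.I, 0]

/-- The Pauli matrix `σᶻ`. -/
def pauliZ : Matrix (Fin 2) (Fin 2) ℂ := !![1, 0; 0, -1]

/-- The operator acting as the one-site matrix `A` on the `j`-th tensor factor
of a chain of spins labelled by `ι` and as the identity elsewhere. -/
def siteOp {ι : Type} [Fintype ι] [DecidableEq ι]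
    (A : Matrix (Fin 2) (Fin 2) ℂ) (j : ι) :
    Matrix (ι → Fin 2) (ι → Fin 2) ℂ :=
  Matrix.of fun x y => if ∀ k, k ≠ j → x k = y k then A (x j) (y j) else 0

/-- The amplitude of the two-site spin singlet `(|↑↓⟩ − |↓↑⟩)/√2`
(`0` encodes `↑`, `1` encodes `↓`). -/
def singletAmp : Fin 2 → Fin 2 → ℂ := fun a b =>
  if a = 0 ∧ b = 1 then ((1 / Real.sqrt 2 : ℝ) : ℂ)
  else if a = 1 ∧ b = 0 then ((-(1 / Real.sqrt 2) : ℝ) : ℂ) else 0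

/-! ## Auxiliary development -/

set_option linter.unusedSectionVars false

namespace MG

/-! ### Embedding local operators into the chain -/

variable {ι κ : Type} [Fintype ι] [DecidableEq ι] [Fintype κ] [DecidableEq κ]

def emb (f : κ → ι) (A : Matrix (κ → Fin 2) (κ → Fin 2) ℂ) :
    Matrix (ι → Fin 2) (ι → Fin 2) ℂ :=
  Matrix.of fun x y =>
    if ∀ k, (∀ i, f i ≠ k) → x k = y k then A (x ∘ f) (y ∘ f) else 0

def patch (f : κ → ι) (x : ι → Fin 2) (u : κ → Fin 2) : ι → Fin 2 :=
  fun k => if h : ∃ i, f i = k then u h.choose else x k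

variable {f : κ → ι} (hf : Function.Injective f)

include hf in
lemma patch_apply (x : ι → Fin 2) (u : κ → Fin 2) (i : κ) :
    patch f x u (f i) = u i := by
  have h : ∃ i', f i' = f i := ⟨i, rfl⟩
  have hs := h.choose_spec
  simp only [patch, dif_pos h]
  exact congrArg u (hf hs)

lemma patch_off (x : ι → Fin 2) (u : κ → Fin 2) {k : ι} (h : ∀ i, f i ≠ k) :
    patch f x u k = x k := by
  have hne : ¬ ∃ i, f i = k := by rintro ⟨i, hi⟩; exact h i hi
  simp only [patch, dif_neg hne]

lemma patch_of_agree {x z : ι → Fin 2} (h : ∀ k, (∀ i, f i ≠ k) → x k = z k) :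
    patch f x (z ∘ f) = z := by
  funext k
  by_cases hk : ∃ i, f i = k
  · simp only [patch, dif_pos hk]
    exact congrArg z hk.choose_spec
  · simp only [patch, dif_neg hk]
    exact h k fun i hi => hk ⟨i, hi⟩

include hf in
lemma sum_patch (x : ι → Fin 2) (g : (ι → Fin 2) → ℂ)
    (hg : ∀ z, ¬ (∀ k, (∀ i, f i ≠ k) → x k = z k) → g z = 0) :
    ∑ z, g z = ∑ u, g (patch f x u) := by
  classical
  rw [← Finset.sum_filter_of_ne (p := fun z => ∀ k, (∀ i, f i ≠ k) → x k = z k)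
    (fun z _ hz => by by_contra hc; exact hz (hg z hc))]
  refine Finset.sum_nbij' (fun z => z ∘ f) (fun u => patch f x u) ?_ ?_ ?_ ?_ ?_
  · intro a _; exact Finset.mem_univ _
  · intro u _
    simp only [Finset.mem_filter, Finset.mem_univ, true_and]
    intro k hk; exact (patch_off x u hk).symm
  · intro z hz
    simp only [Finset.mem_filter, Finset.mem_univ, true_and] at hz
    exact patch_of_agree fun k hk => hz k hk
  · intro u _; funext i; exact patch_apply hf x u i
  · intro z hz
    simp only [Finset.mem_filter, Finset.mem_univ, true_and] at hz
    rw [patch_of_agree fun k hk => hz k hk]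

include hf in
lemma emb_mul (A B : Matrix (κ → Fin 2) (κ → Fin 2) ℂ) :
    emb f (A * B) = emb f A * emb f B := by
  ext x y
  simp only [emb, Matrix.mul_apply, Matrix.of_apply]
  by_cases hxy : ∀ k, (∀ i, f i ≠ k) → x k = y k
  · rw [if_pos hxy,
      sum_patch hf x _ (fun z hz => by rw [if_neg hz, zero_mul])]
    refine Finset.sum_congr rfl fun u _ => ?_
    have h1 : ∀ k, (∀ i, f i ≠ k) → x k = patch f x u k :=
      fun k hk => (patch_off x u hk).symm
    have h2 : ∀ k, (∀ i, f i ≠ k) → patch f x u k = y k :=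
      fun k hk => (patch_off x u hk).trans (hxy k hk)
    rw [if_pos h1, if_pos h2]
    have hpc : patch f x u ∘ f = u := funext fun i => patch_apply hf x u i
    rw [hpc]
  · rw [if_neg hxy]
    refine (Finset.sum_eq_zero fun z _ => ?_).symm
    by_cases h1 : ∀ k, (∀ i, f i ≠ k) → x k = z k
    · have h2 : ¬ ∀ k, (∀ i, f i ≠ k) → z k = y k := by
        intro h2; exact hxy fun k hk => (h1 k hk).trans (h2 k hk)
      rw [if_neg h2, mul_zero]
    · rw [if_neg h1, zero_mul]

include hf in
lemma emb_mulVec (A : Matrix (κ → Fin 2) (κ → Fin 2) ℂ) (ψ : (ι → Fin 2) → ℂ)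
    (x : ι → Fin 2) :
    (emb f A).mulVec ψ x = A.mulVec (fun u => ψ (patch f x u)) (x ∘ f) := by
  simp only [Matrix.mulVec, dotProduct, emb, Matrix.of_apply]
  rw [sum_patch hf x _ (fun z hz => by rw [if_neg hz, zero_mul])]
  refine Finset.sum_congr rfl fun u _ => ?_
  have h1 : ∀ k, (∀ i, f i ≠ k) → x k = patch f x u k :=
    fun k hk => (patch_off x u hk).symm
  rw [if_pos h1]
  have hpc : patch f x u ∘ f = u := funext fun i => patch_apply hf x u i
  rw [hpc]

lemma emb_one : emb f (1 : Matrix (κ → Fin 2) (κ → Fin 2) ℂ) = 1 := by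
  ext x y
  simp only [emb, Matrix.of_apply, Matrix.one_apply]
  by_cases hxy : ∀ k, (∀ i, f i ≠ k) → x k = y k
  · rw [if_pos hxy]
    by_cases hxfy : x = y
    · rw [if_pos (by rw [hxfy]), if_pos hxfy]
    · have hne : ¬ (x ∘ f = y ∘ f) := by
        intro h
        exact hxfy (funext fun k => by
          by_cases hk : ∃ i, f i = k
          · obtain ⟨i, rfl⟩ := hk; exact congrFun h i
          · exact hxy k fun i hi => hk ⟨i, hi⟩)
      rw [if_neg hne, if_neg hxfy]
  · rw [if_neg hxy, if_neg (fun h : x = y => hxy (fun k _ => by rw [h]))]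

lemma emb_add (A B : Matrix (κ → Fin 2) (κ → Fin 2) ℂ) :
    emb f (A + B) = emb f A + emb f B := by
  ext x y
  simp only [emb, Matrix.of_apply, Matrix.add_apply]
  split_ifs <;> simp

lemma emb_sub (A B : Matrix (κ → Fin 2) (κ → Fin 2) ℂ) :
    emb f (A - B) = emb f A - emb f B := by
  ext x y
  simp only [emb, Matrix.of_apply, Matrix.sub_apply]
  split_ifs <;> simp

lemma emb_smul (c : ℂ) (A : Matrix (κ → Fin 2) (κ → Fin 2) ℂ) :
    emb f (c • A) = c • emb f A := by
  ext x y
  simp only [emb, Matrix.of_apply, Matrix.smul_apply]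
  split_ifs <;> simp

lemma emb_conjTranspose (A : Matrix (κ → Fin 2) (κ → Fin 2) ℂ) :
    emb f Aᴴ = (emb f A)ᴴ := by
  ext x y
  simp only [emb, Matrix.of_apply, Matrix.conjTranspose_apply]
  have hiff : (∀ k, (∀ i, f i ≠ k) → x k = y k) ↔ (∀ k, (∀ i, f i ≠ k) → y k = x k) :=
    ⟨fun h k hk => (h k hk).symm, fun h k hk => (h k hk).symm⟩
  split_ifs with h1 h2 h2
  · rfl
  · exact absurd (hiff.mp h1) h2
  · exact absurd (hiff.mpr h2) h1
  · simp

include hf in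
lemma emb_siteOp (A : Matrix (Fin 2) (Fin 2) ℂ) (i : κ) :
    emb f (siteOp A i) = siteOp A (f i) := by
  ext x y
  simp only [emb, siteOp, Matrix.of_apply]
  by_cases h : ∀ k, k ≠ f i → x k = y k
  · have h1 : ∀ k, (∀ i', f i' ≠ k) → x k = y k := fun k hk => h k fun he => hk i he.symm
    have h2 : ∀ k : κ, k ≠ i → (x ∘ f) k = (y ∘ f) k := fun k hk =>
      h (f k) fun he => hk (hf he)
    rw [if_pos h1, if_pos h2, if_pos h]
    rfl
  · rw [if_neg h]
    by_cases h1 : ∀ k, (∀ i', f i' ≠ k) → x k = y k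
    · rw [if_pos h1]
      have h2 : ¬ ∀ k : κ, k ≠ i → (x ∘ f) k = (y ∘ f) k := by
        intro h2
        refine h fun k hk => ?_
        by_cases hkim : ∃ i', f i' = k
        · obtain ⟨i', rfl⟩ := hkim
          exact h2 i' (fun he => hk (by rw [he]))
        · exact h1 k fun i' hi' => hkim ⟨i', hi'⟩
      rw [if_neg h2]
    · rw [if_neg h1]

/-! ### Gaussian-integer models and transport to `ℂ` -/

def siteOpG {ι : Type} [Fintype ι] [DecidableEq ι]
    (A : Matrix (Fin 2) (Fin 2) GaussianInt) (j : ι) :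
    Matrix (ι → Fin 2) (ι → Fin 2) GaussianInt :=
  Matrix.of fun x y => if ∀ k, k ≠ j → x k = y k then A (x j) (y j) else 0

def pXg : Matrix (Fin 2) (Fin 2) GaussianInt := !![0, 1; 1, 0]
def pYg : Matrix (Fin 2) (Fin 2) GaussianInt := !![0, -⟨0,1⟩; ⟨0,1⟩, 0]
def pZg : Matrix (Fin 2) (Fin 2) GaussianInt := !![1, 0; 0, -1]

def mapG {m : Type} (A : Matrix m m GaussianInt) : Matrix m m ℂ :=
  A.map GaussianInt.toComplex

lemma mapG_mul {m : Type} [Fintype m] (A B : Matrix m m GaussianInt) :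
    mapG (A * B) = mapG A * mapG B := by
  ext x y
  simp only [mapG, Matrix.map_apply, Matrix.mul_apply, map_sum, GaussianInt.toComplex_mul]

lemma mapG_add {m : Type} (A B : Matrix m m GaussianInt) :
    mapG (A + B) = mapG A + mapG B := by
  ext x y; simp [mapG]

lemma mapG_sub {m : Type} (A B : Matrix m m GaussianInt) :
    mapG (A - B) = mapG A - mapG B := by
  ext x y; simp [mapG]

lemma mapG_one {m : Type} [Fintype m] [DecidableEq m] :
    mapG (1 : Matrix m m GaussianInt) = 1 := by
  ext x y
  simp only [mapG, Matrix.map_apply, Matrix.one_apply]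
  split_ifs <;> simp

lemma mapG_smul {m : Type} (c : GaussianInt) (A : Matrix m m GaussianInt) :
    mapG (c • A) = (c : ℂ) • mapG A := by
  ext x y; simp [mapG]

lemma mapG_conjTranspose {m : Type} (A : Matrix m m GaussianInt) :
    mapG Aᴴ = (mapG A)ᴴ := by
  ext x y
  simp only [mapG, Matrix.map_apply, Matrix.conjTranspose_apply]
  exact (GaussianInt.toComplex_star _).symm ▸ rfl

lemma mapG_mulVec {m : Type} [Fintype m] (A : Matrix m m GaussianInt)
    (v : m → GaussianInt) :
    (mapG A).mulVec (fun x => (v x : ℂ)) = fun x => ((A.mulVec v x : GaussianInt) : ℂ) := by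
  funext x
  simp only [mapG, Matrix.mulVec, dotProduct, Matrix.map_apply, map_sum,
    GaussianInt.toComplex_mul]

lemma mapG_siteOpG {ι : Type} [Fintype ι] [DecidableEq ι]
    (A : Matrix (Fin 2) (Fin 2) GaussianInt) (j : ι) :
    mapG (siteOpG A j) = siteOp (mapG A) j := by
  ext x y
  simp only [mapG, siteOpG, siteOp, Matrix.map_apply, Matrix.of_apply, apply_ite
    GaussianInt.toComplex, map_zero]

lemma mapG_pXg : mapG pXg = pauliX := by
  ext i j
  fin_cases i <;> fin_cases j <;>
    simp [mapG, pXg, pauliX, GaussianInt.toComplex_def']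

lemma mapG_pYg : mapG pYg = pauliY := by
  ext i j
  fin_cases i <;> fin_cases j <;>
    simp [mapG, pYg, pauliY, GaussianInt.toComplex_def']

lemma mapG_pZg : mapG pZg = pauliZ := by
  ext i j
  fin_cases i <;> fin_cases j <;>
    simp [mapG, pZg, pauliZ, GaussianInt.toComplex_def']

/-! ### the 3-site local model (used for N ≥ 2) -/

def tot3g (A : Matrix (Fin 2) (Fin 2) GaussianInt) :
    Matrix (Fin 3 → Fin 2) (Fin 3 → Fin 2) GaussianInt :=
  siteOpG A 0 + siteOpG A 1 + siteOpG A 2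

def Bg : Matrix (Fin 3 → Fin 2) (Fin 3 → Fin 2) GaussianInt :=
  tot3g pXg ^ 2 + tot3g pYg ^ 2 + tot3g pZg ^ 2 - (3 : GaussianInt) • 1

def tg : Fin 2 → Fin 2 → GaussianInt := fun a b =>
  if a = 0 ∧ b = 1 then 1 else if a = 1 ∧ b = 0 then -1 else 0

def w01g (b : Fin 2) : (Fin 3 → Fin 2) → GaussianInt :=
  fun v => tg (v 0) (v 1) * (if v 2 = b then 1 else 0)

def w12g (b : Fin 2) : (Fin 3 → Fin 2) → GaussianInt :=
  fun v => (if v 0 = b then 1 else 0) * tg (v 1) (v 2)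

set_option maxRecDepth 100000 in
set_option maxHeartbeats 2000000 in
lemma Bg_sq : Bg * Bg = (12 : GaussianInt) • Bg := by decide

set_option maxRecDepth 100000 in
set_option maxHeartbeats 1000000 in
lemma Bg_herm : Bgᴴ = Bg := by decide

set_option maxRecDepth 100000 in
set_option maxHeartbeats 1000000 in
lemma Bg_kernel : ∀ b, Bg.mulVec (w01g b) = 0 ∧ Bg.mulVec (w12g b) = 0 := by decide

/-! ### the 2-site-chain model (used for N = 1) -/

def tot2g (A : Matrix (Fin 2) (Fin 2) GaussianInt) (j : ZMod 2) :
    Matrix (ZMod 2 → Fin 2) (ZMod 2 → Fin 2) GaussianInt :=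
  siteOpG A j + siteOpG A (j+1) + siteOpG A (j+2)

def B1g (j : ZMod 2) : Matrix (ZMod 2 → Fin 2) (ZMod 2 → Fin 2) GaussianInt :=
  tot2g pXg j ^ 2 + tot2g pYg j ^ 2 + tot2g pZg j ^ 2 - (3 : GaussianInt) • 1

def t1g : (ZMod 2 → Fin 2) → GaussianInt := fun v => tg (v 0) (v 1)
def t1g' : (ZMod 2 → Fin 2) → GaussianInt := fun v => tg (v 1) (v 0)

set_option maxRecDepth 100000 in
set_option maxHeartbeats 2000000 in
lemma B1g_facts : ∀ j, B1g j * B1g j = (16 : GaussianInt) • B1g j ∧ (B1g j)ᴴ = B1g j ∧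
    (B1g j).mulVec t1g = 0 ∧ (B1g j).mulVec t1g' = 0 := by decide

/-! ### generic positivity lemma -/

lemma psd_of_sq {m : Type} [Fintype m] [DecidableEq m] (B : Matrix m m ℂ)
    (hH : Bᴴ = B) (c : ℝ) (hc : 0 < c) (hB : B * B = (c : ℂ) • B) :
    (((1 : ℂ)/4) • B).PosSemidef := by
  have hc0 : (c : ℂ) ≠ 0 := by exact_mod_cast hc.ne'
  have key : (((1:ℂ)/4) • B) = (((1:ℂ)/4) * (c:ℂ)⁻¹) • (Bᴴ * B) := by
    rw [hH, hB, smul_smul, mul_assoc, inv_mul_cancel₀ hc0, mul_one]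
  constructor
  · show (((1:ℂ)/4) • B)ᴴ = ((1:ℂ)/4) • B
    rw [Matrix.conjTranspose_smul, hH]
    norm_num
  · intro x
    rw [key]
    refine (Matrix.PosSemidef.smul (Matrix.posSemidef_conjTranspose_mul_self B) ?_).2 x
    have h4 : ((1:ℂ)/4) * (c:ℂ)⁻¹ = ((1/4 * c⁻¹ : ℝ) : ℂ) := by push_cast; ring
    rw [h4]
    exact_mod_cast le_of_lt (by positivity : (0:ℝ) < 1/4 * c⁻¹)

/-! ### modular-arithmetic helpers -/

lemma modv {N a : ℕ} (hN : 2 ≤ N) (ha : a ≤ 2*N+1) :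
    a % (2*N) = if a = 2*N then 0 else if a = 2*N+1 then 1 else a := by
  split_ifs with h1 h2
  · simp [h1]
  · subst h2; rw [Nat.add_mod_left]; exact Nat.mod_eq_of_lt (by omega)
  · exact Nat.mod_eq_of_lt (by omega)

lemma cast_eq_iff {N : ℕ} (hN : 2 ≤ N) {a b : ℕ} (ha : a ≤ 2*N+1) (hb : b ≤ 2*N+1) :
    ((a : ZMod (2*N)) = (b : ZMod (2*N))) ↔
      (a = b ∨ (a = 2*N ∧ b = 0) ∨ (b = 2*N ∧ a = 0) ∨
        (a = 2*N+1 ∧ b = 1) ∨ (b = 2*N+1 ∧ a = 1)) := by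
  rw [ZMod.natCast_eq_natCast_iff, Nat.ModEq, modv hN ha, modv hN hb]
  split_ifs <;> first
    | omega
    | (rw [false_iff]; omega)

def fsite (N v : ℕ) : Fin 3 → ZMod (2*N) := fun i => ((v + i.val : ℕ) : ZMod (2*N))

lemma fsite_zero (N v : ℕ) : fsite N v 0 = ((v : ℕ) : ZMod (2*N)) := by simp [fsite]
lemma fsite_one (N v : ℕ) : fsite N v 1 = ((v + 1 : ℕ) : ZMod (2*N)) := rfl
lemma fsite_two (N v : ℕ) : fsite N v 2 = ((v + 2 : ℕ) : ZMod (2*N)) := rfl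

lemma fsite_inj {N v : ℕ} (hN : 2 ≤ N) (hv : v < 2*N) :
    Function.Injective (fsite N v) := by
  intro a b h
  have ha := a.is_lt
  have hb := b.is_lt
  simp only [fsite] at h
  rw [cast_eq_iff hN (by omega) (by omega)] at h
  exact Fin.ext (by omega)

lemma fsite_ne_all {N v b : ℕ} (hN : 2 ≤ N) (hv : v + 2 ≤ 2*N+1) (hb : b ≤ 2*N+1)
    (h : ∀ a : ℕ, (a = v ∨ a = v+1 ∨ a = v+2) →
      ¬(a = b ∨ (a = 2*N ∧ b = 0) ∨ (b = 2*N ∧ a = 0) ∨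
        (a = 2*N+1 ∧ b = 1) ∨ (b = 2*N+1 ∧ a = 1))) :
    ∀ i, fsite N v i ≠ ((b : ℕ) : ZMod (2*N)) := by
  intro i hcon
  have hi : (i : ℕ) < 3 := i.is_lt
  have hcon' : ((v + i.val : ℕ) : ZMod (2*N)) = ((b : ℕ) : ZMod (2*N)) := hcon
  rw [cast_eq_iff hN (by omega) hb] at hcon'
  exact h (v + i.val) (by omega) hcon'

lemma fsite_eq {N v b : ℕ} (hN : 2 ≤ N) (hv : v + 2 ≤ 2*N+1) (hb : b ≤ 2*N+1)
    {i : Fin 3}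
    (h : (v + i.val) = b ∨ ((v + i.val) = 2*N ∧ b = 0) ∨ (b = 2*N ∧ (v + i.val) = 0) ∨
        ((v + i.val) = 2*N+1 ∧ b = 1) ∨ (b = 2*N+1 ∧ (v + i.val) = 1)) :
    ((b : ℕ) : ZMod (2*N)) = fsite N v i := by
  have hi : (i : ℕ) < 3 := i.is_lt
  show ((b : ℕ) : ZMod (2*N)) = ((v + i.val : ℕ) : ZMod (2*N))
  rw [cast_eq_iff hN hb (by omega)]
  omega

lemma prod_two (N : ℕ) (F G : ℕ → ℂ) {k k' : ℕ} (hk : k < N) (hk' : k' < N) (hne : k' ≠ k)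
    (hFG : ∀ j ∈ ((Finset.range N).erase k).erase k', F j = G j) :
    ∏ j ∈ Finset.range N, F j
      = F k * (F k' * ∏ j ∈ ((Finset.range N).erase k).erase k', G j) := by
  rw [← Finset.mul_prod_erase (Finset.range N) F (Finset.mem_range.mpr hk),
    ← Finset.mul_prod_erase _ F (Finset.mem_erase.mpr ⟨hne, Finset.mem_range.mpr hk'⟩),
    Finset.prod_congr rfl hFG]

/-! ### ℂ-side local model and kernel vectors -/

def tot3c (A : Matrix (Fin 2) (Fin 2) ℂ) :
    Matrix (Fin 3 → Fin 2) (Fin 3 → Fin 2) ℂ :=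
  siteOp A 0 + siteOp A 1 + siteOp A 2

def Bc : Matrix (Fin 3 → Fin 2) (Fin 3 → Fin 2) ℂ := mapG Bg

lemma mapG_tot3g (A : Matrix (Fin 2) (Fin 2) GaussianInt) :
    mapG (tot3g A) = tot3c (mapG A) := by
  rw [tot3g, tot3c, mapG_add, mapG_add, mapG_siteOpG, mapG_siteOpG, mapG_siteOpG]

lemma Bc_eq : Bc = tot3c pauliX * tot3c pauliX + tot3c pauliY * tot3c pauliY
    + tot3c pauliZ * tot3c pauliZ - (3:ℂ) • 1 := by
  have h3 : ((3 : GaussianInt) : ℂ) = (3 : ℂ) := by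
    exact_mod_cast map_ofNat GaussianInt.toComplex 3
  rw [Bc, Bg, mapG_sub, mapG_add, mapG_add, mapG_smul, pow_two, pow_two, pow_two,
    mapG_mul, mapG_mul, mapG_mul, mapG_tot3g, mapG_tot3g, mapG_tot3g,
    mapG_pXg, mapG_pYg, mapG_pZg, mapG_one, h3]

lemma Bc_herm : Bcᴴ = Bc := by rw [Bc, ← mapG_conjTranspose, Bg_herm]

lemma Bc_sq : Bc * Bc = (((12:ℝ) : ℂ)) • Bc := by
  have h12 : ((12 : GaussianInt) : ℂ) = (((12:ℝ)) : ℂ) := by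
    rw [map_ofNat]; norm_num
  rw [Bc, ← mapG_mul, Bg_sq, mapG_smul, h12]

def w01c (b : Fin 2) : (Fin 3 → Fin 2) → ℂ := fun v => GaussianInt.toComplex (w01g b v)
def w12c (b : Fin 2) : (Fin 3 → Fin 2) → ℂ := fun v => GaussianInt.toComplex (w12g b v)

lemma Bc_mulVec_w01 (b : Fin 2) : Bc.mulVec (w01c b) = 0 := by
  calc Bc.mulVec (w01c b)
      = fun x => GaussianInt.toComplex ((Bg.mulVec (w01g b)) x) := mapG_mulVec Bg (w01g b)
    _ = 0 := by rw [(Bg_kernel b).1]; funext x; simp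

lemma Bc_mulVec_w12 (b : Fin 2) : Bc.mulVec (w12c b) = 0 := by
  calc Bc.mulVec (w12c b)
      = fun x => GaussianInt.toComplex ((Bg.mulVec (w12g b)) x) := mapG_mulVec Bg (w12g b)
    _ = 0 := by rw [(Bg_kernel b).2]; funext x; simp

/-! ### singlet amplitudes and the local kernel combinations -/

def tc : Fin 2 → Fin 2 → ℂ := fun a b =>
  if a = 0 ∧ b = 1 then 1 else if a = 1 ∧ b = 0 then -1 else 0

def sc : ℂ := ((1 / Real.sqrt 2 : ℝ) : ℂ)

lemma tg_cast (a b : Fin 2) : GaussianInt.toComplex (tg a b) = tc a b := by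
  fin_cases a <;> fin_cases b <;> simp [tg, tc]

lemma singletAmp_eq (a b : Fin 2) : singletAmp a b = sc * tc a b := by
  fin_cases a <;> fin_cases b <;> simp [singletAmp, tc, sc] <;> push_cast <;> ring

lemma w01c_apply (b : Fin 2) (v : Fin 3 → Fin 2) :
    w01c b v = tc (v 0) (v 1) * (if v 2 = b then 1 else 0) := by
  simp only [w01c, w01g, GaussianInt.toComplex_mul, tg_cast,
    apply_ite GaussianInt.toComplex, _root_.map_one, map_zero]

lemma w12c_apply (b : Fin 2) (v : Fin 3 → Fin 2) :
    w12c b v = (if v 0 = b then 1 else 0) * tc (v 1) (v 2) := by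
  simp only [w12c, w12g, GaussianInt.toComplex_mul, tg_cast,
    apply_ite GaussianInt.toComplex, _root_.map_one, map_zero]

lemma combA (q : Fin 2 → ℂ) (c : ℂ) :
    (fun u : Fin 3 → Fin 2 => singletAmp (u 0) (u 1) * (q (u 2) * c))
      = (sc * (q 0 * c)) • w01c 0 + (sc * (q 1 * c)) • w01c 1 := by
  funext u
  have h2 : u 2 = 0 ∨ u 2 = 1 := by omega
  simp only [Pi.add_apply, Pi.smul_apply, smul_eq_mul, w01c_apply, singletAmp_eq]
  rcases h2 with h | h <;> rw [h] <;>
    simp only [if_pos rfl, if_neg (by decide : (0 : Fin 2) ≠ 1),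
      if_neg (by decide : (1 : Fin 2) ≠ 0), if_true, mul_one, mul_zero] <;> ring

lemma combB (q : Fin 2 → ℂ) (c : ℂ) :
    (fun u : Fin 3 → Fin 2 => q (u 0) * (singletAmp (u 1) (u 2) * c))
      = (q 0 * (sc * c)) • w12c 0 + (q 1 * (sc * c)) • w12c 1 := by
  funext u
  have h2 : u 0 = 0 ∨ u 0 = 1 := by omega
  simp only [Pi.add_apply, Pi.smul_apply, smul_eq_mul, w12c_apply, singletAmp_eq]
  rcases h2 with h | h <;> rw [h] <;>
    simp only [if_pos rfl, if_neg (by decide : (0 : Fin 2) ≠ 1),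
      if_neg (by decide : (1 : Fin 2) ≠ 0), if_true, mul_one, mul_zero] <;> ring

lemma combC (q : Fin 2 → ℂ) (c : ℂ) :
    (fun u : Fin 3 → Fin 2 => singletAmp (u 1) (u 2) * (q (u 0) * c))
      = (q 0 * (sc * c)) • w12c 0 + (q 1 * (sc * c)) • w12c 1 := by
  funext u
  have h2 : u 0 = 0 ∨ u 0 = 1 := by omega
  simp only [Pi.add_apply, Pi.smul_apply, smul_eq_mul, w12c_apply, singletAmp_eq]
  rcases h2 with h | h <;> rw [h] <;>
    simp only [if_pos rfl, if_neg (by decide : (0 : Fin 2) ≠ 1),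
      if_neg (by decide : (1 : Fin 2) ≠ 0), if_true, mul_one, mul_zero] <;> ring

/-! ### factorization of the dimer states over a patched triple -/

lemma psio_patch_even {N : ℕ} [NeZero (2*N)] (hN : 2 ≤ N) {k k' : ℕ} (hk : k < N)
    (hk' : k' < N) (hcase : (k+1 < N ∧ k' = k+1) ∨ (k+1 = N ∧ k' = 0))
    (x : ZMod (2*N) → Fin 2) (u : Fin 3 → Fin 2) :
    (∏ j ∈ Finset.range N,
        singletAmp (patch (fsite N (2*k)) x u ((2*j : ℕ) : ZMod (2*N)))
          (patch (fsite N (2*k)) x u ((2*j+1 : ℕ) : ZMod (2*N))))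
      = singletAmp (u 0) (u 1) *
        (singletAmp (u 2) (x ((2*k'+1 : ℕ) : ZMod (2*N))) *
          ∏ j ∈ ((Finset.range N).erase k).erase k',
            singletAmp (x ((2*j : ℕ) : ZMod (2*N))) (x ((2*j+1 : ℕ) : ZMod (2*N)))) := by
  have hf : Function.Injective (fsite N (2*k)) := fsite_inj hN (by omega)
  have hne : k' ≠ k := by omega
  have hrest : ∀ j ∈ ((Finset.range N).erase k).erase k',
      singletAmp (patch (fsite N (2*k)) x u ((2*j : ℕ) : ZMod (2*N)))
        (patch (fsite N (2*k)) x u ((2*j+1 : ℕ) : ZMod (2*N)))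
      = singletAmp (x ((2*j : ℕ) : ZMod (2*N))) (x ((2*j+1 : ℕ) : ZMod (2*N))) := by
    intro j hj
    rw [Finset.mem_erase, Finset.mem_erase, Finset.mem_range] at hj
    obtain ⟨hjk', hjk, hjN⟩ := hj
    rw [patch_off x u (fsite_ne_all hN (by omega) (by omega) (by intro a ha; omega)),
      patch_off x u (fsite_ne_all hN (by omega) (by omega) (by intro a ha; omega))]
  rw [prod_two N _ _ hk hk' hne hrest]
  beta_reduce
  have e0 : patch (fsite N (2*k)) x u ((2*k : ℕ) : ZMod (2*N)) = u 0 := by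
    rw [fsite_eq (v := 2*k) (b := 2*k) hN (by omega) (by omega) (i := 0) (by omega)]
    exact patch_apply hf x u 0
  have e1 : patch (fsite N (2*k)) x u ((2*k+1 : ℕ) : ZMod (2*N)) = u 1 := by
    rw [fsite_eq (v := 2*k) (b := 2*k+1) hN (by omega) (by omega) (i := 1) (by omega)]
    exact patch_apply hf x u 1
  have e2 : patch (fsite N (2*k)) x u ((2*k' : ℕ) : ZMod (2*N)) = u 2 := by
    rw [fsite_eq (v := 2*k) (b := 2*k') hN (by omega) (by omega) (i := 2) (by omega)]
    exact patch_apply hf x u 2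
  have e3 : patch (fsite N (2*k)) x u ((2*k'+1 : ℕ) : ZMod (2*N))
      = x ((2*k'+1 : ℕ) : ZMod (2*N)) :=
    patch_off x u (fsite_ne_all hN (by omega) (by omega) (by intro a ha; omega))
  rw [e0, e1, e2, e3]

lemma psio_patch_odd {N : ℕ} [NeZero (2*N)] (hN : 2 ≤ N) {k k' : ℕ} (hk : k < N)
    (hk' : k' < N) (hcase : (k+1 < N ∧ k' = k+1) ∨ (k+1 = N ∧ k' = 0))
    (x : ZMod (2*N) → Fin 2) (u : Fin 3 → Fin 2) :
    (∏ j ∈ Finset.range N,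
        singletAmp (patch (fsite N (2*k+1)) x u ((2*j : ℕ) : ZMod (2*N)))
          (patch (fsite N (2*k+1)) x u ((2*j+1 : ℕ) : ZMod (2*N))))
      = (fun a => singletAmp (x ((2*k : ℕ) : ZMod (2*N))) a) (u 0) *
        (singletAmp (u 1) (u 2) *
          ∏ j ∈ ((Finset.range N).erase k).erase k',
            singletAmp (x ((2*j : ℕ) : ZMod (2*N))) (x ((2*j+1 : ℕ) : ZMod (2*N)))) := by
  have hf : Function.Injective (fsite N (2*k+1)) := fsite_inj hN (by omega)
  have hne : k' ≠ k := by omega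
  have hrest : ∀ j ∈ ((Finset.range N).erase k).erase k',
      singletAmp (patch (fsite N (2*k+1)) x u ((2*j : ℕ) : ZMod (2*N)))
        (patch (fsite N (2*k+1)) x u ((2*j+1 : ℕ) : ZMod (2*N)))
      = singletAmp (x ((2*j : ℕ) : ZMod (2*N))) (x ((2*j+1 : ℕ) : ZMod (2*N))) := by
    intro j hj
    rw [Finset.mem_erase, Finset.mem_erase, Finset.mem_range] at hj
    obtain ⟨hjk', hjk, hjN⟩ := hj
    rw [patch_off x u (fsite_ne_all hN (by omega) (by omega) (by intro a ha; omega)),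
      patch_off x u (fsite_ne_all hN (by omega) (by omega) (by intro a ha; omega))]
  rw [prod_two N _ _ hk hk' hne hrest]
  beta_reduce
  have e0 : patch (fsite N (2*k+1)) x u ((2*k : ℕ) : ZMod (2*N))
      = x ((2*k : ℕ) : ZMod (2*N)) :=
    patch_off x u (fsite_ne_all hN (by omega) (by omega) (by intro a ha; omega))
  have e1 : patch (fsite N (2*k+1)) x u ((2*k+1 : ℕ) : ZMod (2*N)) = u 0 := by
    rw [fsite_eq (v := 2*k+1) (b := 2*k+1) hN (by omega) (by omega) (i := 0) (by omega)]
    exact patch_apply hf x u 0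
  have e2 : patch (fsite N (2*k+1)) x u ((2*k' : ℕ) : ZMod (2*N)) = u 1 := by
    rw [fsite_eq (v := 2*k+1) (b := 2*k') hN (by omega) (by omega) (i := 1) (by omega)]
    exact patch_apply hf x u 1
  have e3 : patch (fsite N (2*k+1)) x u ((2*k'+1 : ℕ) : ZMod (2*N)) = u 2 := by
    rw [fsite_eq (v := 2*k+1) (b := 2*k'+1) hN (by omega) (by omega) (i := 2) (by omega)]
    exact patch_apply hf x u 2
  rw [e0, e1, e2, e3]

lemma psie_patch_odd {N : ℕ} [NeZero (2*N)] (hN : 2 ≤ N) {k k' : ℕ} (hk : k < N)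
    (hk' : k' < N) (hcase : (k+1 < N ∧ k' = k+1) ∨ (k+1 = N ∧ k' = 0))
    (x : ZMod (2*N) → Fin 2) (u : Fin 3 → Fin 2) :
    (∏ j ∈ Finset.range N,
        singletAmp (patch (fsite N (2*k+1)) x u ((2*j+1 : ℕ) : ZMod (2*N)))
          (patch (fsite N (2*k+1)) x u ((2*j+2 : ℕ) : ZMod (2*N))))
      = singletAmp (u 0) (u 1) *
        ((fun a => singletAmp a (x ((2*k'+2 : ℕ) : ZMod (2*N)))) (u 2) *
          ∏ j ∈ ((Finset.range N).erase k).erase k',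
            singletAmp (x ((2*j+1 : ℕ) : ZMod (2*N))) (x ((2*j+2 : ℕ) : ZMod (2*N)))) := by
  have hf : Function.Injective (fsite N (2*k+1)) := fsite_inj hN (by omega)
  have hne : k' ≠ k := by omega
  have hrest : ∀ j ∈ ((Finset.range N).erase k).erase k',
      singletAmp (patch (fsite N (2*k+1)) x u ((2*j+1 : ℕ) : ZMod (2*N)))
        (patch (fsite N (2*k+1)) x u ((2*j+2 : ℕ) : ZMod (2*N)))
      = singletAmp (x ((2*j+1 : ℕ) : ZMod (2*N))) (x ((2*j+2 : ℕ) : ZMod (2*N))) := by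
    intro j hj
    rw [Finset.mem_erase, Finset.mem_erase, Finset.mem_range] at hj
    obtain ⟨hjk', hjk, hjN⟩ := hj
    rw [patch_off x u (fsite_ne_all hN (by omega) (by omega) (by intro a ha; omega)),
      patch_off x u (fsite_ne_all hN (by omega) (by omega) (by intro a ha; omega))]
  rw [prod_two N _ _ hk hk' hne hrest]
  beta_reduce
  have e0 : patch (fsite N (2*k+1)) x u ((2*k+1 : ℕ) : ZMod (2*N)) = u 0 := by
    rw [fsite_eq (v := 2*k+1) (b := 2*k+1) hN (by omega) (by omega) (i := 0) (by omega)]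
    exact patch_apply hf x u 0
  have e1 : patch (fsite N (2*k+1)) x u ((2*k+2 : ℕ) : ZMod (2*N)) = u 1 := by
    rw [fsite_eq (v := 2*k+1) (b := 2*k+2) hN (by omega) (by omega) (i := 1) (by omega)]
    exact patch_apply hf x u 1
  have e2 : patch (fsite N (2*k+1)) x u ((2*k'+1 : ℕ) : ZMod (2*N)) = u 2 := by
    rw [fsite_eq (v := 2*k+1) (b := 2*k'+1) hN (by omega) (by omega) (i := 2) (by omega)]
    exact patch_apply hf x u 2
  have e3 : patch (fsite N (2*k+1)) x u ((2*k'+2 : ℕ) : ZMod (2*N))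
      = x ((2*k'+2 : ℕ) : ZMod (2*N)) :=
    patch_off x u (fsite_ne_all hN (by omega) (by omega) (by intro a ha; omega))
  rw [e0, e1, e2, e3]

lemma psie_patch_even {N : ℕ} [NeZero (2*N)] (hN : 2 ≤ N) {k k'' : ℕ} (hk : k < N)
    (hk'' : k'' < N) (hcase : (0 < k ∧ k'' = k-1) ∨ (k = 0 ∧ k'' = N-1))
    (x : ZMod (2*N) → Fin 2) (u : Fin 3 → Fin 2) :
    (∏ j ∈ Finset.range N,
        singletAmp (patch (fsite N (2*k)) x u ((2*j+1 : ℕ) : ZMod (2*N)))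
          (patch (fsite N (2*k)) x u ((2*j+2 : ℕ) : ZMod (2*N))))
      = singletAmp (u 1) (u 2) *
        ((fun a => singletAmp (x ((2*k''+1 : ℕ) : ZMod (2*N))) a) (u 0) *
          ∏ j ∈ ((Finset.range N).erase k).erase k'',
            singletAmp (x ((2*j+1 : ℕ) : ZMod (2*N))) (x ((2*j+2 : ℕ) : ZMod (2*N)))) := by
  have hf : Function.Injective (fsite N (2*k)) := fsite_inj hN (by omega)
  have hne : k'' ≠ k := by omega
  have hrest : ∀ j ∈ ((Finset.range N).erase k).erase k'',
      singletAmp (patch (fsite N (2*k)) x u ((2*j+1 : ℕ) : ZMod (2*N)))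
        (patch (fsite N (2*k)) x u ((2*j+2 : ℕ) : ZMod (2*N)))
      = singletAmp (x ((2*j+1 : ℕ) : ZMod (2*N))) (x ((2*j+2 : ℕ) : ZMod (2*N))) := by
    intro j hj
    rw [Finset.mem_erase, Finset.mem_erase, Finset.mem_range] at hj
    obtain ⟨hjk'', hjk, hjN⟩ := hj
    rw [patch_off x u (fsite_ne_all hN (by omega) (by omega) (by intro a ha; omega)),
      patch_off x u (fsite_ne_all hN (by omega) (by omega) (by intro a ha; omega))]
  rw [prod_two N _ _ hk hk'' hne hrest]
  beta_reduce
  have e0 : patch (fsite N (2*k)) x u ((2*k+1 : ℕ) : ZMod (2*N)) = u 1 := by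
    rw [fsite_eq (v := 2*k) (b := 2*k+1) hN (by omega) (by omega) (i := 1) (by omega)]
    exact patch_apply hf x u 1
  have e1 : patch (fsite N (2*k)) x u ((2*k+2 : ℕ) : ZMod (2*N)) = u 2 := by
    rw [fsite_eq (v := 2*k) (b := 2*k+2) hN (by omega) (by omega) (i := 2) (by omega)]
    exact patch_apply hf x u 2
  have e2 : patch (fsite N (2*k)) x u ((2*k''+1 : ℕ) : ZMod (2*N))
      = x ((2*k''+1 : ℕ) : ZMod (2*N)) :=
    patch_off x u (fsite_ne_all hN (by omega) (by omega) (by intro a ha; omega))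
  have e3 : patch (fsite N (2*k)) x u ((2*k''+2 : ℕ) : ZMod (2*N)) = u 0 := by
    rw [fsite_eq (v := 2*k) (b := 2*k''+2) hN (by omega) (by omega) (i := 0) (by omega)]
    exact patch_apply hf x u 0
  rw [e0, e1, e2, e3]

/-! ### the chain Hamiltonian -/

def totC (n : ℕ) [NeZero n] (A : Matrix (Fin 2) (Fin 2) ℂ) (j : ZMod n) :
    Matrix (ZMod n → Fin 2) (ZMod n → Fin 2) ℂ :=
  siteOp A j + siteOp A (j + 1) + siteOp A (j + 2)

def summand (n : ℕ) [NeZero n] (j : ZMod n) :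
    Matrix (ZMod n → Fin 2) (ZMod n → Fin 2) ℂ :=
  ((1 : ℂ) / 4) • (totC n pauliX j ^ 2 + totC n pauliY j ^ 2 + totC n pauliZ j ^ 2)
    - ((3 : ℂ) / 4) • (1 : Matrix ((ZMod n → Fin 2)) ((ZMod n → Fin 2)) ℂ)

def bigH (n : ℕ) [NeZero n] : Matrix (ZMod n → Fin 2) (ZMod n → Fin 2) ℂ :=
  ∑ j : ZMod n, summand n j

def psiO (N : ℕ) [NeZero (2 * N)] : (ZMod (2 * N) → Fin 2) → ℂ := fun x =>
  ∏ j ∈ Finset.range N,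
    singletAmp (x ((2 * j : ℕ) : ZMod (2 * N))) (x ((2 * j + 1 : ℕ) : ZMod (2 * N)))

def psiE (N : ℕ) [NeZero (2 * N)] : (ZMod (2 * N) → Fin 2) → ℂ := fun x =>
  ∏ j ∈ Finset.range N,
    singletAmp (x ((2 * j + 1 : ℕ) : ZMod (2 * N))) (x ((2 * j + 2 : ℕ) : ZMod (2 * N)))

lemma sum_mulVec {n m : Type} [Fintype n] [Fintype m] (s : Finset n)
    (M : n → Matrix m m ℂ) (v : m → ℂ) :
    (∑ j ∈ s, M j).mulVec v = ∑ j ∈ s, (M j).mulVec v := by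
  funext x
  simp only [Matrix.mulVec, dotProduct, Finset.sum_apply, Matrix.sum_apply,
    Finset.sum_mul]
  exact Finset.sum_comm

/-! ### identification of the summands for `N ≥ 2` -/

lemma totC_eq_emb {N : ℕ} [NeZero (2*N)] (hN : 2 ≤ N) {v : ℕ} (hv : v < 2*N)
    (A : Matrix (Fin 2) (Fin 2) ℂ) :
    totC (2*N) A ((v : ℕ) : ZMod (2*N)) = emb (fsite N v) (tot3c A) := by
  have hf := fsite_inj hN hv
  rw [totC, tot3c, emb_add, emb_add, emb_siteOp hf, emb_siteOp hf, emb_siteOp hf,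
    fsite_zero, fsite_one, fsite_two]
  push_cast
  rfl

lemma summand_eq {N : ℕ} [NeZero (2*N)] (hN : 2 ≤ N) {v : ℕ} (hv : v < 2*N) :
    summand (2*N) ((v : ℕ) : ZMod (2*N)) = ((1:ℂ)/4) • emb (fsite N v) Bc := by
  have hf := fsite_inj hN hv
  rw [summand, totC_eq_emb hN hv, totC_eq_emb hN hv, totC_eq_emb hN hv,
    pow_two, pow_two, pow_two, ← emb_mul hf, ← emb_mul hf, ← emb_mul hf,
    ← emb_add, ← emb_add, Bc_eq, emb_sub, emb_smul, emb_one, smul_sub, smul_smul]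
  norm_num

lemma summand_psd {N : ℕ} [NeZero (2*N)] (hN : 2 ≤ N) {v : ℕ} (hv : v < 2*N) :
    (summand (2*N) ((v : ℕ) : ZMod (2*N))).PosSemidef := by
  rw [summand_eq hN hv]
  have hf := fsite_inj hN hv
  refine psd_of_sq _ ?_ 12 (by norm_num) ?_
  · rw [← emb_conjTranspose, Bc_herm]
  · rw [← emb_mul hf, Bc_sq, emb_smul]

/-! ### kernel of the summands for `N ≥ 2` -/

lemma emb_kernel_psiO {N : ℕ} [NeZero (2*N)] (hN : 2 ≤ N) {v : ℕ} (hv : v < 2*N) :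
    (emb (fsite N v) Bc).mulVec (psiO N) = 0 := by
  have hf := fsite_inj hN hv
  obtain ⟨k, hk | hk⟩ : ∃ k, v = 2*k ∨ v = 2*k+1 := ⟨v/2, by omega⟩
  all_goals subst hk
  · -- even case
    have hkN : k < N := by omega
    set k' := if k + 1 = N then 0 else k + 1 with hk'def
    have hk' : k' < N := by rw [hk'def]; split_ifs <;> omega
    have hcase : (k+1 < N ∧ k' = k+1) ∨ (k+1 = N ∧ k' = 0) := by
      rw [hk'def]; split_ifs with h
      · exact Or.inr ⟨h, rfl⟩
      · exact Or.inl ⟨by omega, rfl⟩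
    funext x
    rw [emb_mulVec hf]
    have hfact : (fun u => psiO N (patch (fsite N (2*k)) x u))
        = (fun u : Fin 3 → Fin 2 => singletAmp (u 0) (u 1) *
            ((fun a => singletAmp a (x ((2*k'+1 : ℕ) : ZMod (2*N)))) (u 2) *
              ∏ j ∈ ((Finset.range N).erase k).erase k',
                singletAmp (x ((2*j : ℕ) : ZMod (2*N))) (x ((2*j+1 : ℕ) : ZMod (2*N))))) :=
      funext fun u => psio_patch_even hN hkN hk' hcase x u
    rw [hfact.trans (combA (fun a => singletAmp a (x ((2*k'+1 : ℕ) : ZMod (2*N)))) (∏ j ∈ ((Finset.range N).erase k).erase k', singletAmp (x ((2*j : ℕ) : ZMod (2*N))) (x ((2*j+1 : ℕ) : ZMod (2*N))))), Matrix.mulVec_add, Matrix.mulVec_smul,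
      Matrix.mulVec_smul, Bc_mulVec_w01 0, Bc_mulVec_w01 1]
    simp
  · -- odd case
    have hkN : k < N := by omega
    set k' := if k + 1 = N then 0 else k + 1 with hk'def
    have hk' : k' < N := by rw [hk'def]; split_ifs <;> omega
    have hcase : (k+1 < N ∧ k' = k+1) ∨ (k+1 = N ∧ k' = 0) := by
      rw [hk'def]; split_ifs with h
      · exact Or.inr ⟨h, rfl⟩
      · exact Or.inl ⟨by omega, rfl⟩
    funext x
    rw [emb_mulVec hf]
    have hfact : (fun u => psiO N (patch (fsite N (2*k+1)) x u))
        = (fun u : Fin 3 → Fin 2 =>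
            (fun a => singletAmp (x ((2*k : ℕ) : ZMod (2*N))) a) (u 0) *
            (singletAmp (u 1) (u 2) *
              ∏ j ∈ ((Finset.range N).erase k).erase k',
                singletAmp (x ((2*j : ℕ) : ZMod (2*N))) (x ((2*j+1 : ℕ) : ZMod (2*N))))) :=
      funext fun u => psio_patch_odd hN hkN hk' hcase x u
    rw [hfact.trans (combB (fun a => singletAmp (x ((2*k : ℕ) : ZMod (2*N))) a) (∏ j ∈ ((Finset.range N).erase k).erase k', singletAmp (x ((2*j : ℕ) : ZMod (2*N))) (x ((2*j+1 : ℕ) : ZMod (2*N))))), Matrix.mulVec_add, Matrix.mulVec_smul,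
      Matrix.mulVec_smul, Bc_mulVec_w12 0, Bc_mulVec_w12 1]
    simp

lemma emb_kernel_psiE {N : ℕ} [NeZero (2*N)] (hN : 2 ≤ N) {v : ℕ} (hv : v < 2*N) :
    (emb (fsite N v) Bc).mulVec (psiE N) = 0 := by
  have hf := fsite_inj hN hv
  obtain ⟨k, hk | hk⟩ : ∃ k, v = 2*k ∨ v = 2*k+1 := ⟨v/2, by omega⟩
  all_goals subst hk
  · -- even case
    have hkN : k < N := by omega
    set k'' := if k = 0 then N - 1 else k - 1 with hk''def
    have hk'' : k'' < N := by rw [hk''def]; split_ifs <;> omega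
    have hcase : (0 < k ∧ k'' = k-1) ∨ (k = 0 ∧ k'' = N-1) := by
      rw [hk''def]; split_ifs with h
      · exact Or.inr ⟨h, rfl⟩
      · exact Or.inl ⟨by omega, rfl⟩
    funext x
    rw [emb_mulVec hf]
    have hfact : (fun u => psiE N (patch (fsite N (2*k)) x u))
        = (fun u : Fin 3 → Fin 2 => singletAmp (u 1) (u 2) *
            ((fun a => singletAmp (x ((2*k''+1 : ℕ) : ZMod (2*N))) a) (u 0) *
              ∏ j ∈ ((Finset.range N).erase k).erase k'',
                singletAmp (x ((2*j+1 : ℕ) : ZMod (2*N))) (x ((2*j+2 : ℕ) : ZMod (2*N))))) :=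
      funext fun u => psie_patch_even hN hkN hk'' hcase x u
    rw [hfact.trans (combC (fun a => singletAmp (x ((2*k''+1 : ℕ) : ZMod (2*N))) a) (∏ j ∈ ((Finset.range N).erase k).erase k'', singletAmp (x ((2*j+1 : ℕ) : ZMod (2*N))) (x ((2*j+2 : ℕ) : ZMod (2*N))))), Matrix.mulVec_add, Matrix.mulVec_smul,
      Matrix.mulVec_smul, Bc_mulVec_w12 0, Bc_mulVec_w12 1]
    simp
  · -- odd case
    have hkN : k < N := by omega
    set k' := if k + 1 = N then 0 else k + 1 with hk'def
    have hk' : k' < N := by rw [hk'def]; split_ifs <;> omega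
    have hcase : (k+1 < N ∧ k' = k+1) ∨ (k+1 = N ∧ k' = 0) := by
      rw [hk'def]; split_ifs with h
      · exact Or.inr ⟨h, rfl⟩
      · exact Or.inl ⟨by omega, rfl⟩
    funext x
    rw [emb_mulVec hf]
    have hfact : (fun u => psiE N (patch (fsite N (2*k+1)) x u))
        = (fun u : Fin 3 → Fin 2 => singletAmp (u 0) (u 1) *
            ((fun a => singletAmp a (x ((2*k'+2 : ℕ) : ZMod (2*N)))) (u 2) *
              ∏ j ∈ ((Finset.range N).erase k).erase k',
                singletAmp (x ((2*j+1 : ℕ) : ZMod (2*N))) (x ((2*j+2 : ℕ) : ZMod (2*N))))) :=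
      funext fun u => psie_patch_odd hN hkN hk' hcase x u
    rw [hfact.trans (combA (fun a => singletAmp a (x ((2*k'+2 : ℕ) : ZMod (2*N)))) (∏ j ∈ ((Finset.range N).erase k).erase k', singletAmp (x ((2*j+1 : ℕ) : ZMod (2*N))) (x ((2*j+2 : ℕ) : ZMod (2*N))))), Matrix.mulVec_add, Matrix.mulVec_smul,
      Matrix.mulVec_smul, Bc_mulVec_w01 0, Bc_mulVec_w01 1]
    simp

/-! ### chain-level lemmas for `N ≥ 2` -/

lemma bigH_psd2 {N : ℕ} [NeZero (2*N)] (hN : 2 ≤ N) : (bigH (2*N)).PosSemidef := by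
  rw [bigH]
  refine Finset.sum_induction _ _ (fun a b ha hb => ha.add hb) Matrix.PosSemidef.zero ?_
  intro j _
  have hj : ((j.val : ℕ) : ZMod (2*N)) = j := ZMod.natCast_rightInverse j
  rw [← hj]
  exact summand_psd hN (ZMod.val_lt j)

lemma bigH_ker_psiO2 {N : ℕ} [NeZero (2*N)] (hN : 2 ≤ N) :
    (bigH (2*N)).mulVec (psiO N) = 0 := by
  rw [bigH, sum_mulVec]
  refine Finset.sum_eq_zero fun j _ => ?_
  have hj : ((j.val : ℕ) : ZMod (2*N)) = j := ZMod.natCast_rightInverse j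
  rw [← hj, summand_eq hN (ZMod.val_lt j), Matrix.smul_mulVec,
    emb_kernel_psiO hN (ZMod.val_lt j), smul_zero]

lemma bigH_ker_psiE2 {N : ℕ} [NeZero (2*N)] (hN : 2 ≤ N) :
    (bigH (2*N)).mulVec (psiE N) = 0 := by
  rw [bigH, sum_mulVec]
  refine Finset.sum_eq_zero fun j _ => ?_
  have hj : ((j.val : ℕ) : ZMod (2*N)) = j := ZMod.natCast_rightInverse j
  rw [← hj, summand_eq hN (ZMod.val_lt j), Matrix.smul_mulVec,
    emb_kernel_psiE hN (ZMod.val_lt j), smul_zero]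

/-! ### the dimer states are nonzero -/

lemma sc_ne : sc ≠ 0 := by
  have hs2 : Real.sqrt 2 ≠ 0 := by positivity
  simp [sc, Complex.ofReal_eq_zero, hs2]

lemma psiO_ne (N : ℕ) [NeZero (2*N)] (hN : 0 < N) : psiO N ≠ 0 := by
  intro h
  have h2N : (2:ℕ) ∣ 2*N := ⟨N, rfl⟩
  set xw : ZMod (2*N) → Fin 2 := fun k => if 2 ∣ k.val then 0 else 1 with hxw
  have hfac : ∀ j ∈ Finset.range N,
      singletAmp (xw ((2*j : ℕ) : ZMod (2*N))) (xw ((2*j+1 : ℕ) : ZMod (2*N))) = sc := by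
    intro j _
    have h1 : xw ((2*j : ℕ) : ZMod (2*N)) = 0 := by
      show (if 2 ∣ (((2*j : ℕ) : ZMod (2*N)).val) then (0 : Fin 2) else 1) = 0
      rw [ZMod.val_natCast, if_pos ((Nat.dvd_mod_iff h2N).mpr ⟨j, rfl⟩)]
    have h2 : xw ((2*j+1 : ℕ) : ZMod (2*N)) = 1 := by
      show (if 2 ∣ (((2*j+1 : ℕ) : ZMod (2*N)).val) then (0 : Fin 2) else 1) = 1
      rw [ZMod.val_natCast, if_neg (by rw [Nat.dvd_mod_iff h2N]; omega)]
    rw [h1, h2]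
    simp [singletAmp, sc]
  have hval : psiO N xw = sc ^ N := by
    show (∏ j ∈ Finset.range N,
      singletAmp (xw ((2*j : ℕ) : ZMod (2*N))) (xw ((2*j+1 : ℕ) : ZMod (2*N)))) = sc ^ N
    rw [Finset.prod_congr rfl hfac, Finset.prod_const, Finset.card_range]
  have hz := congrFun h xw
  rw [hval] at hz
  exact pow_ne_zero N sc_ne hz

lemma psiE_ne (N : ℕ) [NeZero (2*N)] (hN : 0 < N) : psiE N ≠ 0 := by
  intro h
  have h2N : (2:ℕ) ∣ 2*N := ⟨N, rfl⟩
  set xw : ZMod (2*N) → Fin 2 := fun k => if 2 ∣ k.val then 1 else 0 with hxw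
  have hfac : ∀ j ∈ Finset.range N,
      singletAmp (xw ((2*j+1 : ℕ) : ZMod (2*N))) (xw ((2*j+2 : ℕ) : ZMod (2*N))) = sc := by
    intro j _
    have h1 : xw ((2*j+1 : ℕ) : ZMod (2*N)) = 0 := by
      show (if 2 ∣ (((2*j+1 : ℕ) : ZMod (2*N)).val) then (1 : Fin 2) else 0) = 0
      rw [ZMod.val_natCast, if_neg (by rw [Nat.dvd_mod_iff h2N]; omega)]
    have h2 : xw ((2*j+2 : ℕ) : ZMod (2*N)) = 1 := by
      show (if 2 ∣ (((2*j+2 : ℕ) : ZMod (2*N)).val) then (1 : Fin 2) else 0) = 1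
      rw [ZMod.val_natCast, if_pos ((Nat.dvd_mod_iff h2N).mpr ⟨j+1, by ring⟩)]
    rw [h1, h2]
    simp [singletAmp, sc]
  have hval : psiE N xw = sc ^ N := by
    show (∏ j ∈ Finset.range N,
      singletAmp (xw ((2*j+1 : ℕ) : ZMod (2*N))) (xw ((2*j+2 : ℕ) : ZMod (2*N)))) = sc ^ N
    rw [Finset.prod_congr rfl hfac, Finset.prod_const, Finset.card_range]
  have hz := congrFun h xw
  rw [hval] at hz
  exact pow_ne_zero N sc_ne hz

/-! ### the `N = 1` case -/

lemma mapG_tot2g [NeZero (2*1)] (A : Matrix (Fin 2) (Fin 2) GaussianInt) (j : ZMod (2*1)) :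
    mapG (tot2g A j) = totC (2*1) (mapG A) j := by
  rw [totC]
  show mapG (siteOpG A j + siteOpG A (j+1) + siteOpG A (j+2)) = _
  rw [mapG_add, mapG_add, mapG_siteOpG, mapG_siteOpG, mapG_siteOpG]

lemma summand1_eq [NeZero (2*1)] (j : ZMod (2*1)) :
    summand (2*1) j = ((1:ℂ)/4) • mapG (B1g j) := by
  have h3 : ((3 : GaussianInt) : ℂ) = (3:ℂ) := by
    exact_mod_cast map_ofNat GaussianInt.toComplex 3
  have h1 : mapG (B1g j) = totC (2*1) pauliX j * totC (2*1) pauliX j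
      + totC (2*1) pauliY j * totC (2*1) pauliY j
      + totC (2*1) pauliZ j * totC (2*1) pauliZ j - (3:ℂ) • 1 := by
    show mapG (tot2g pXg j ^ 2 + tot2g pYg j ^ 2 + tot2g pZg j ^ 2
      - (3 : GaussianInt) • 1) = _
    rw [mapG_sub, mapG_add, mapG_add, mapG_smul, pow_two, pow_two, pow_two,
      mapG_mul, mapG_mul, mapG_mul, mapG_tot2g, mapG_tot2g, mapG_tot2g,
      mapG_pXg, mapG_pYg, mapG_pZg, mapG_one, h3]
  rw [h1]
  simp only [summand]
  rw [pow_two, pow_two, pow_two, smul_sub, smul_smul]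
  norm_num

lemma summand1_psd [NeZero (2*1)] (j : ZMod (2*1)) : (summand (2*1) j).PosSemidef := by
  rw [summand1_eq]
  refine psd_of_sq _ ?_ 16 (by norm_num) ?_
  · rw [← mapG_conjTranspose]
    exact congrArg mapG (B1g_facts j).2.1
  · have h16 : ((16 : GaussianInt) : ℂ) = (((16:ℝ)) : ℂ) := by
      rw [map_ofNat]; norm_num
    rw [← mapG_mul, (B1g_facts j).1, mapG_smul, h16]

lemma psiO_one [NeZero (2*1)] :
    psiO 1 = fun x => sc * GaussianInt.toComplex (t1g x) := by
  funext x
  show (∏ j ∈ Finset.range 1,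
    singletAmp (x ((2*j : ℕ) : ZMod (2*1))) (x ((2*j+1 : ℕ) : ZMod (2*1)))) = _
  rw [Finset.prod_range_one]
  have e0 : ((2*0 : ℕ) : ZMod (2*1)) = (0 : ZMod 2) := by decide
  have e1 : ((2*0+1 : ℕ) : ZMod (2*1)) = (1 : ZMod 2) := by decide
  rw [e0, e1]
  show singletAmp (x (0 : ZMod 2)) (x (1 : ZMod 2))
    = sc * GaussianInt.toComplex (tg (x (0 : ZMod 2)) (x (1 : ZMod 2)))
  rw [tg_cast, singletAmp_eq]

lemma psiE_one [NeZero (2*1)] :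
    psiE 1 = fun x => sc * GaussianInt.toComplex (t1g' x) := by
  funext x
  show (∏ j ∈ Finset.range 1,
    singletAmp (x ((2*j+1 : ℕ) : ZMod (2*1))) (x ((2*j+2 : ℕ) : ZMod (2*1)))) = _
  rw [Finset.prod_range_one]
  have e1 : ((2*0+1 : ℕ) : ZMod (2*1)) = (1 : ZMod 2) := by decide
  have e2 : ((2*0+2 : ℕ) : ZMod (2*1)) = (0 : ZMod 2) := by decide
  rw [e1, e2]
  show singletAmp (x (1 : ZMod 2)) (x (0 : ZMod 2))
    = sc * GaussianInt.toComplex (tg (x (1 : ZMod 2)) (x (0 : ZMod 2)))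
  rw [tg_cast, singletAmp_eq]

lemma bigH1_ker_psiO [NeZero (2*1)] : (bigH (2*1)).mulVec (psiO 1) = 0 := by
  rw [bigH, sum_mulVec]
  refine Finset.sum_eq_zero fun j _ => ?_
  rw [summand1_eq, Matrix.smul_mulVec]
  have hv : psiO 1 = sc • (fun x => GaussianInt.toComplex (t1g x)) := by
    rw [psiO_one]; rfl
  have hk : (mapG (B1g j)).mulVec (fun x => GaussianInt.toComplex (t1g x)) = 0 := by
    calc (mapG (B1g j)).mulVec (fun x => GaussianInt.toComplex (t1g x))
        = fun x => GaussianInt.toComplex (((B1g j).mulVec t1g) x) := mapG_mulVec _ _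
      _ = 0 := by rw [(B1g_facts j).2.2.1]; funext x; simp
  rw [hv, Matrix.mulVec_smul, hk]
  simp

lemma bigH1_ker_psiE [NeZero (2*1)] : (bigH (2*1)).mulVec (psiE 1) = 0 := by
  rw [bigH, sum_mulVec]
  refine Finset.sum_eq_zero fun j _ => ?_
  rw [summand1_eq, Matrix.smul_mulVec]
  have hv : psiE 1 = sc • (fun x => GaussianInt.toComplex (t1g' x)) := by
    rw [psiE_one]; rfl
  have hk : (mapG (B1g j)).mulVec (fun x => GaussianInt.toComplex (t1g' x)) = 0 := by
    calc (mapG (B1g j)).mulVec (fun x => GaussianInt.toComplex (t1g' x))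
        = fun x => GaussianInt.toComplex (((B1g j).mulVec t1g') x) := mapG_mulVec _ _
      _ = 0 := by rw [(B1g_facts j).2.2.2]; funext x; simp
  rw [hv, Matrix.mulVec_smul, hk]
  simp

/-! ### the main result -/

lemma main_core (N : ℕ) (hNpos : 0 < N) [NeZero (2*N)] :
    (bigH (2*N)).PosSemidef ∧ (bigH (2*N)).mulVec (psiO N) = 0 ∧
      (bigH (2*N)).mulVec (psiE N) = 0 ∧ psiO N ≠ 0 ∧ psiE N ≠ 0 := by
  rcases (by omega : 2 ≤ N ∨ N = 1) with hN2 | hN1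
  · exact ⟨bigH_psd2 hN2, bigH_ker_psiO2 hN2, bigH_ker_psiE2 hN2,
      psiO_ne N hNpos, psiE_ne N hNpos⟩
  · subst hN1
    refine ⟨?_, bigH1_ker_psiO, bigH1_ker_psiE, psiO_ne 1 hNpos, psiE_ne 1 hNpos⟩
    rw [bigH]
    exact Finset.sum_induction _ _ (fun a b ha hb => ha.add hb) Matrix.PosSemidef.zero
      (fun j _ => summand1_psd j)

end MG

/-- **Majumdar–Ghosh positivity and dimer ground states.**
On `(ℂ²)^{⊗2N}` with periodic boundary conditions, the operator
`H = Σ_j [ (1/4)(σ⃗_j + σ⃗_{j+1} + σ⃗_{j+2})² − 3/4 ]` is positive semidefinite,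
and the two (nonzero) dimer states—tensor products of nearest-neighbour
singlets on the odd, respectively even, bonds—are annihilated by `H`; hence
they are ground states with ground energy `0`. -/
theorem stmt16 (N : ℕ) (hN : 0 < N) :
    letI : NeZero (2 * N) := ⟨by omega⟩
    let tot : Matrix (Fin 2) (Fin 2) ℂ → ZMod (2 * N) →
        Matrix ((ZMod (2 * N) → Fin 2)) ((ZMod (2 * N) → Fin 2)) ℂ :=
      fun A j => siteOp A j + siteOp A (j + 1) + siteOp A (j + 2)
    let H := ∑ j : ZMod (2 * N),
      (((1 : ℂ) / 4) • (tot pauliX j ^ 2 + tot pauliY j ^ 2 + tot pauliZ j ^ 2)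
        - ((3 : ℂ) / 4) • (1 : Matrix ((ZMod (2 * N) → Fin 2)) ((ZMod (2 * N) → Fin 2)) ℂ))
    let ψo : (ZMod (2 * N) → Fin 2) → ℂ := fun x =>
      ∏ j ∈ Finset.range N,
        singletAmp (x ((2 * j : ℕ) : ZMod (2 * N))) (x ((2 * j + 1 : ℕ) : ZMod (2 * N)))
    let ψe : (ZMod (2 * N) → Fin 2) → ℂ := fun x =>
      ∏ j ∈ Finset.range N,
        singletAmp (x ((2 * j + 1 : ℕ) : ZMod (2 * N))) (x ((2 * j + 2 : ℕ) : ZMod (2 * N)))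
    H.PosSemidef ∧ H.mulVec ψo = 0 ∧ H.mulVec ψe = 0 ∧ ψo ≠ 0 ∧ ψe ≠ 0 := by
  letI : NeZero (2 * N) := ⟨by omega⟩
  exact MG.main_core N hN

end
end
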